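/- arXiv:2011.08448 — 2 statements merged into one kernel-verified Lean document; each statement's English description precedes it below -/
import Mathlib

section
/- Let G = (V,E) be a graph and (A, V\A) a cut of neighbourhood diversity at most k with module partition A_1,…,A_k of A and B_i = N_G(A_i) \ A. Then for every u,v ∈ A, d_G(u,v) = min( d_{G[A]}(u,v), min over 1 ≤ i ≤ k of (d_G(u,A_i) + 1 + d_G(B_i,v)) ). -/
open scoped Classical

/-- `setEDist G u S` is the distance in `G` from the vertex `u` to the set `S`,
namely `min_{s ∈ S} d_G(u,s)`, with value `⊤` (i.e. `+∞`) when `S = ∅`. -/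
noncomputable def setEDist {V : Type*} (G : SimpleGraph V) (u : V) (S : Set V) : ℕ∞ :=
  ⨅ s ∈ S, G.edist u s

lemma setEDist_le {V : Type*} (G : SimpleGraph V) {u s : V} {S : Set V}
    (hs : s ∈ S) : setEDist G u S ≤ G.edist u s :=
  iInf₂_le s hs

lemma setEDist_exists {V : Type*} [Fintype V] (G : SimpleGraph V) (u : V) (S : Set V)
    (h : setEDist G u S ≠ ⊤) : ∃ s ∈ S, setEDist G u S = G.edist u s := by
  have hne : S.Nonempty := by
    by_contra hS
    rw [Set.not_nonempty_iff_eq_empty] at hS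
    simp [setEDist, hS] at h
  obtain ⟨s, hs, hmin⟩ := Set.exists_min_image S (fun s => G.edist u s) (Set.toFinite S) hne
  exact ⟨s, hs, le_antisymm (setEDist_le G hs) (le_iInf₂ fun t ht => hmin t ht)⟩

lemma enat_iInf_exists {k : ℕ} (g : Fin k → ℕ∞) (h : (⨅ i, g i) ≠ ⊤) :
    ∃ i, (⨅ j, g j) = g i := by
  cases isEmpty_or_nonempty (Fin k) with
  | inl he => simp [iInf_of_empty] at h
  | inr hne =>
    obtain ⟨i, hi⟩ := Finite.exists_min g
    exact ⟨i, le_antisymm (iInf_le _ _) (le_iInf hi)⟩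

/-- **Lemma 3.2, second case.** Let `(A, V \ A)` be a cut of neighbourhood diversity at
most `k`, with module partition `A_1, …, A_k` of `A` and `B_i = N_G(A_i) \ A`.  Then for
all `u, v ∈ A`,
`d_G(u,v) = min( d_{G[A]}(u,v), min_{1 ≤ i ≤ k} (d_G(u,A_i) + 1 + d_G(B_i,v)) )`. -/
theorem dist_formula_inside {V : Type*} [Fintype V] (G : SimpleGraph V)
    (A : Set V) (k : ℕ) (Apart : Fin k → Set V)
    (hcover : (⋃ i, Apart i) = A)
    (hdisj : ∀ i j, i ≠ j → Disjoint (Apart i) (Apart j))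
    (hmod : ∀ i, ∀ u ∈ Apart i, ∀ v ∈ Apart i, ∀ x ∉ A, (G.Adj u x ↔ G.Adj v x))
    (B : Fin k → Set V) (hB : ∀ i, B i = {x | x ∉ A ∧ ∃ a ∈ Apart i, G.Adj a x})
    (u v : V) (hu : u ∈ A) (hv : v ∈ A) :
    G.edist u v =
      min ((G.induce A).edist ⟨u, hu⟩ ⟨v, hv⟩)
        (⨅ i : Fin k, (setEDist G u (Apart i) + 1 + setEDist G v (B i))) := by
  -- the key upper bound on the RHS given any walk from u to v
  have key : ∀ {u v : V} (p : G.Walk u v) (hu : u ∈ A) (hv : v ∈ A),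
      min ((G.induce A).edist ⟨u, hu⟩ ⟨v, hv⟩)
        (⨅ i : Fin k, (setEDist G u (Apart i) + 1 + setEDist G v (B i)))
        ≤ (p.length : ℕ∞) := by
    intro u v p
    induction p with
    | nil =>
      intro hu hv
      refine le_trans (min_le_left _ _) ?_
      simp [SimpleGraph.edist_self]
    | @cons u w v h q ih =>
      intro hu hv
      have hlen : ((q.cons h).length : ℕ∞) = 1 + (q.length : ℕ∞) := by
        push_cast [SimpleGraph.Walk.length_cons]
        ring
      rw [hlen]
      by_cases hw : w ∈ A
      · -- step stays inside A
        have huw : G.edist u w ≤ 1 := by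
          simpa using G.edist_le h.toWalk
        have h1 : (G.induce A).edist ⟨u, hu⟩ ⟨v, hv⟩ ≤
            1 + (G.induce A).edist ⟨w, hw⟩ ⟨v, hv⟩ := by
          have hadj : (G.induce A).Adj ⟨u, hu⟩ ⟨w, hw⟩ := h
          have : (G.induce A).edist ⟨u, hu⟩ ⟨w, hw⟩ ≤ 1 := by
            simpa using (G.induce A).edist_le hadj.toWalk
          calc (G.induce A).edist ⟨u, hu⟩ ⟨v, hv⟩
              ≤ (G.induce A).edist ⟨u, hu⟩ ⟨w, hw⟩ +
                (G.induce A).edist ⟨w, hw⟩ ⟨v, hv⟩ := SimpleGraph.edist_triangle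
            _ ≤ 1 + (G.induce A).edist ⟨w, hw⟩ ⟨v, hv⟩ := add_le_add_left this _
        have h2 : ∀ i, setEDist G u (Apart i) ≤ 1 + setEDist G w (Apart i) := by
          intro i
          by_cases ht : setEDist G w (Apart i) = ⊤
          · simp [ht]
          · obtain ⟨a, ha, hae⟩ := setEDist_exists G w (Apart i) ht
            calc setEDist G u (Apart i) ≤ G.edist u a := setEDist_le G ha
              _ ≤ G.edist u w + G.edist w a := SimpleGraph.edist_triangle
              _ ≤ 1 + G.edist w a := add_le_add_left huw _
              _ = 1 + setEDist G w (Apart i) := by rw [hae]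
        have h3 : ∀ i, setEDist G u (Apart i) + 1 + setEDist G v (B i) ≤
            1 + (setEDist G w (Apart i) + 1 + setEDist G v (B i)) := by
          intro i
          calc setEDist G u (Apart i) + 1 + setEDist G v (B i)
              ≤ (1 + setEDist G w (Apart i)) + 1 + setEDist G v (B i) := by
                exact add_le_add_left (add_le_add_left (h2 i) _) _
            _ = 1 + (setEDist G w (Apart i) + 1 + setEDist G v (B i)) := by ring
        refine le_trans ?_ (add_le_add_right (ih hw hv) 1)
        -- min f ≤ 1 + min g
        rcases le_total ((G.induce A).edist ⟨w, hw⟩ ⟨v, hv⟩)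
            (⨅ i : Fin k, (setEDist G w (Apart i) + 1 + setEDist G v (B i))) with hle | hle
        · rw [min_eq_left hle]
          exact le_trans (min_le_left _ _) h1
        · rw [min_eq_right hle]
          by_cases ht : (⨅ i : Fin k, (setEDist G w (Apart i) + 1 + setEDist G v (B i))) = ⊤
          · simp [ht]
          · obtain ⟨i, hi⟩ := enat_iInf_exists _ ht
            rw [hi]
            exact le_trans (min_le_right _ _) (le_trans (iInf_le _ i) (h3 i))
      · -- step leaves A
        obtain ⟨i, hui⟩ : ∃ i, u ∈ Apart i := by
          have : u ∈ ⋃ i, Apart i := hcover ▸ hu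
          simpa using this
        have hwB : w ∈ B i := by
          rw [hB i]; exact ⟨hw, u, hui, h⟩
        have h0 : setEDist G u (Apart i) = 0 := by
          have := setEDist_le G (u := u) hui
          simpa [SimpleGraph.edist_self] using this
        refine le_trans (min_le_right _ _) (le_trans (iInf_le _ i) ?_)
        rw [h0]
        have : setEDist G v (B i) ≤ (q.length : ℕ∞) := by
          calc setEDist G v (B i) ≤ G.edist v w := setEDist_le G hwB
            _ = G.edist w v := SimpleGraph.edist_comm
            _ ≤ (q.length : ℕ∞) := G.edist_le q
        calc (0 : ℕ∞) + 1 + setEDist G v (B i) = 1 + setEDist G v (B i) := by ring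
          _ ≤ 1 + (q.length : ℕ∞) := add_le_add_right this 1
  refine le_antisymm (le_min ?_ (le_iInf fun i => ?_)) ?_
  · -- edist ≤ induced edist
    by_cases ht : (G.induce A).edist ⟨u, hu⟩ ⟨v, hv⟩ = ⊤
    · simp [ht]
    · obtain ⟨p, hp⟩ := SimpleGraph.exists_walk_of_edist_ne_top ht
      calc G.edist u v ≤ ((p.map (SimpleGraph.Embedding.induce A).toHom).length : ℕ∞) :=
            G.edist_le _
        _ = (p.length : ℕ∞) := by rw [SimpleGraph.Walk.length_map]
        _ = (G.induce A).edist ⟨u, hu⟩ ⟨v, hv⟩ := hp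
  · -- edist ≤ each detour term
    by_cases h1 : setEDist G u (Apart i) = ⊤
    · simp [h1]
    by_cases h2 : setEDist G v (B i) = ⊤
    · simp [h2]
    obtain ⟨a, ha, hae⟩ := setEDist_exists G u (Apart i) h1
    obtain ⟨b, hb, hbe⟩ := setEDist_exists G v (B i) h2
    rw [hB i] at hb
    obtain ⟨hbA, a', ha', hadj'⟩ := hb
    have hadj : G.Adj a b := (hmod i a' ha' a ha b hbA).mp hadj'
    have hab : G.edist a b ≤ 1 := by
      simpa using G.edist_le hadj.toWalk
    calc G.edist u v ≤ G.edist u a + G.edist a v := SimpleGraph.edist_triangle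
      _ ≤ G.edist u a + (G.edist a b + G.edist b v) :=
          add_le_add_right SimpleGraph.edist_triangle _
      _ ≤ G.edist u a + (1 + G.edist b v) :=
          add_le_add_right (add_le_add_left hab _) _
      _ = G.edist u a + 1 + G.edist v b := by
          rw [SimpleGraph.edist_comm (u := b)]; ring
      _ = setEDist G u (Apart i) + 1 + setEDist G v (B i) := by rw [hae, hbe]
  · -- RHS ≤ edist
    by_cases ht : G.edist u v = ⊤
    · simp [ht]
    · obtain ⟨p, hp⟩ := SimpleGraph.exists_walk_of_edist_ne_top ht
      exact hp ▸ key p hu hv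
end

section
/- Let G = (V,E,w) be a connected edge-weighted graph and (A, V\A) an unweighted cut of neighbourhood diversity at most k, with minimal partition A_1,…,A_k of A and B_i = N_G(A_i)\A. Let H_B be obtained from G \ A by adding fresh vertices a_{ij} (1 ≤ i,j ≤ k), joining each a_{ij} to all of B_i with unit-weight edges, and adding for i < j an edge a_{ij}a_{ji} of weight d_G(A_i,A_j). Then for all u,v ∈ V \ A, d_G(u,v) = d_{H_B}(u,v). -/
open scoped Classical

variable {V : Type*}

/-- The weight of a walk: the sum of the edge weights `w` along its darts. -/
def walkWeight (w : V → V → ℕ) {G : SimpleGraph V} {u v : V} (p : G.Walk u v) : ℕ :=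
  (p.darts.map fun d => w d.toProd.1 d.toProd.2).sum

/-- Weighted shortest-path distance (`⊤` if there is no walk). -/
noncomputable def wdist (G : SimpleGraph V) (w : V → V → ℕ) (u v : V) : ℕ∞ :=
  ⨅ p : G.Walk u v, (walkWeight w p : ℕ∞)

/-- Weighted distance between two vertex sets: `min_{s∈S, t∈T} d(s,t)`. -/
noncomputable def wSetDist (G : SimpleGraph V) (w : V → V → ℕ) (S T : Set V) : ℕ∞ :=
  ⨅ s ∈ S, ⨅ t ∈ T, wdist G w s t

lemma walkWeight_nil {w : V → V → ℕ} {G : SimpleGraph V} {u : V} :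
    walkWeight w (SimpleGraph.Walk.nil : G.Walk u u) = 0 := rfl

lemma walkWeight_cons {w : V → V → ℕ} {G : SimpleGraph V} {u x v : V}
    (h : G.Adj u x) (p : G.Walk x v) :
    walkWeight w (SimpleGraph.Walk.cons h p) = w u x + walkWeight w p := by
  simp [walkWeight]

lemma walkWeight_append {w : V → V → ℕ} {G : SimpleGraph V} {u x v : V}
    (p : G.Walk u x) (q : G.Walk x v) :
    walkWeight w (p.append q) = walkWeight w p + walkWeight w q := by
  simp [walkWeight]

lemma wdist_le_walkWeight {G : SimpleGraph V} {w : V → V → ℕ} {u v : V}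
    (p : G.Walk u v) : wdist G w u v ≤ (walkWeight w p : ℕ∞) := iInf_le _ p

lemma exists_walk_le_wdist {G : SimpleGraph V} {w : V → V → ℕ} {u v : V}
    (h : wdist G w u v ≠ ⊤) :
    ∃ p : G.Walk u v, (walkWeight w p : ℕ∞) ≤ wdist G w u v := by
  have h1 : wdist G w u v < wdist G w u v + 1 := (ENat.lt_add_one_iff h).mpr le_rfl
  obtain ⟨p, hp⟩ := iInf_lt_iff.mp
    (show (⨅ p : G.Walk u v, (walkWeight w p : ℕ∞)) < wdist G w u v + 1 from h1)
  exact ⟨p, (ENat.lt_add_one_iff h).mp hp⟩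

lemma exists_walk_le_wSetDist {G : SimpleGraph V} {w : V → V → ℕ} {S T : Set V}
    (h : wSetDist G w S T ≠ ⊤) :
    ∃ s ∈ S, ∃ t ∈ T, ∃ p : G.Walk s t,
      (walkWeight w p : ℕ∞) ≤ wSetDist G w S T := by
  have h1 : wSetDist G w S T < wSetDist G w S T + 1 := (ENat.lt_add_one_iff h).mpr le_rfl
  have h2 : (⨅ s ∈ S, ⨅ t ∈ T, wdist G w s t) < wSetDist G w S T + 1 := h1
  simp only [iInf_lt_iff] at h2
  obtain ⟨s, hs, t, ht, hlt⟩ := h2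
  have hle : wdist G w s t ≤ wSetDist G w S T := (ENat.lt_add_one_iff h).mp hlt
  have hne : wdist G w s t ≠ ⊤ := fun htop => h (top_le_iff.mp (htop ▸ hle))
  obtain ⟨p, hp⟩ := exists_walk_le_wdist hne
  exact ⟨s, hs, t, ht, p, hp.trans hle⟩

lemma wSetDist_le_wdist {G : SimpleGraph V} {w : V → V → ℕ} {S T : Set V}
    {s t : V} (hs : s ∈ S) (ht : t ∈ T) : wSetDist G w S T ≤ wdist G w s t := by
  rw [wSetDist]
  exact iInf_le_of_le s (iInf_le_of_le hs (iInf_le_of_le t (iInf_le _ ht)))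

lemma wdist_triangle_cons {G : SimpleGraph V} {w : V → V → ℕ} {x y z : V}
    (h : G.Adj x y) : wdist G w x z ≤ (w x y : ℕ∞) + wdist G w y z := by
  by_cases htop : wdist G w y z = ⊤
  · simp [htop]
  · obtain ⟨p, hp⟩ := exists_walk_le_wdist htop
    calc wdist G w x z ≤ (walkWeight w (SimpleGraph.Walk.cons h p) : ℕ∞) :=
          wdist_le_walkWeight _
      _ = (w x y : ℕ∞) + walkWeight w p := by rw [walkWeight_cons]; push_cast; ring
      _ ≤ _ := by exact add_le_add_right hp _

/-- The underlying relation of the gadget graph `H_B` (Definition 4.2): on `G \ A`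
(the vertices of `A` are kept as isolated junk vertices) we add fresh vertices
`a_{ij} = inr (i,j)` for the parts `A_i` with `B_i ≠ ∅`; each `a_{ij}` is joined to all
of `B_i`, and `a_{ij}` is joined to `a_{ji}` for `i ≠ j`. -/
def gadgetRelB {k : ℕ} (G : SimpleGraph V) (A : Set V) (B : Fin k → Set V) :
    (V ⊕ Fin k × Fin k) → (V ⊕ Fin k × Fin k) → Prop
  | Sum.inl u, Sum.inl v => u ∉ A ∧ v ∉ A ∧ G.Adj u v
  | Sum.inl u, Sum.inr (i, _) => u ∈ B i
  | Sum.inr (i, j), Sum.inr (i', j') =>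
      i' = j ∧ j' = i ∧ i ≠ j ∧ (B i).Nonempty ∧ (B j).Nonempty
  | _, _ => False

/-- The gadget graph `H_B` of Definition 4.2. -/
def gadgetB {k : ℕ} (G : SimpleGraph V) (A : Set V) (B : Fin k → Set V) :
    SimpleGraph (V ⊕ Fin k × Fin k) :=
  SimpleGraph.fromRel (gadgetRelB G A B)

/-- The edge weights of `H_B`: weights of `G` outside `A`, unit weights between `B_i` and
`a_{ij}`, and weight `d_G(A_i, A_j)` on the matching edge `a_{ij} a_{ji}`. -/
noncomputable def gadgetWeightB {k : ℕ} (G : SimpleGraph V) (w : V → V → ℕ)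
    (Apart : Fin k → Set V) : (V ⊕ Fin k × Fin k) → (V ⊕ Fin k × Fin k) → ℕ
  | Sum.inl u, Sum.inl v => w u v
  | Sum.inr (i, _), Sum.inr (i', _) => (wSetDist G w (Apart i) (Apart i')).toNat
  | _, _ => 1

section Gadget
variable {k : ℕ} {G : SimpleGraph V} {A : Set V} {B : Fin k → Set V}

lemma gadget_adj_inl_inl {u v : V} (hu : u ∉ A) (hv : v ∉ A) (h : G.Adj u v) :
    (gadgetB G A B).Adj (Sum.inl u) (Sum.inl v) := by
  rw [gadgetB, SimpleGraph.fromRel_adj]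
  exact ⟨by simp [h.ne], Or.inl ⟨hu, hv, h⟩⟩

lemma gadget_adj_inl_inr {u : V} {i j : Fin k} (hu : u ∈ B i) :
    (gadgetB G A B).Adj (Sum.inl u) (Sum.inr (i, j)) := by
  rw [gadgetB, SimpleGraph.fromRel_adj]
  exact ⟨by simp, Or.inl hu⟩

lemma gadget_adj_inr_inr {i j : Fin k} (hij : i ≠ j) (h1 : (B i).Nonempty)
    (h2 : (B j).Nonempty) :
    (gadgetB G A B).Adj (Sum.inr (i, j)) (Sum.inr (j, i)) := by
  rw [gadgetB, SimpleGraph.fromRel_adj]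
  refine ⟨by simp [Prod.ext_iff]; tauto, Or.inl ⟨rfl, rfl, hij, h1, h2⟩⟩

lemma gadget_adj_inl_elim {u : V} {s : V ⊕ Fin k × Fin k}
    (h : (gadgetB G A B).Adj (Sum.inl u) s) :
    (∃ v, s = Sum.inl v ∧ u ∉ A ∧ v ∉ A ∧ G.Adj u v) ∨
    (∃ i j, s = Sum.inr (i, j) ∧ u ∈ B i) := by
  rw [gadgetB, SimpleGraph.fromRel_adj] at h
  obtain ⟨-, h⟩ := h
  match s, h with
  | Sum.inl v, Or.inl ⟨h1, h2, h3⟩ => exact Or.inl ⟨v, rfl, h1, h2, h3⟩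
  | Sum.inl v, Or.inr ⟨h1, h2, h3⟩ => exact Or.inl ⟨v, rfl, h2, h1, h3.symm⟩
  | Sum.inr (i, j), Or.inl h1 => exact Or.inr ⟨i, j, rfl, h1⟩
  | Sum.inr (i, j), Or.inr h1 => exact absurd h1 (by simp [gadgetRelB])

lemma gadget_adj_inr_elim {i j : Fin k} {s : V ⊕ Fin k × Fin k}
    (h : (gadgetB G A B).Adj (Sum.inr (i, j)) s) :
    (∃ b, s = Sum.inl b ∧ b ∈ B i) ∨
    (s = Sum.inr (j, i) ∧ i ≠ j) := by
  rw [gadgetB, SimpleGraph.fromRel_adj] at h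
  obtain ⟨-, h⟩ := h
  match s, h with
  | Sum.inl b, Or.inl h1 => exact absurd h1 (by simp [gadgetRelB])
  | Sum.inl b, Or.inr h1 => exact Or.inl ⟨b, rfl, h1⟩
  | Sum.inr (i', j'), Or.inl ⟨h1, h2, h3, _⟩ => subst h1; subst h2; exact Or.inr ⟨rfl, h3⟩
  | Sum.inr (i', j'), Or.inr ⟨h1, h2, h3, _⟩ => subst h1; subst h2; exact Or.inr ⟨rfl, h3.symm⟩

end Gadget

section Main
variable {k : ℕ} {G : SimpleGraph V} {w : V → V → ℕ} {A : Set V}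
  {Apart : Fin k → Set V} {B : Fin k → Set V}

/-- Exit lemma: a walk from `x ∈ A` to `v ∉ A` leaves `A` at some `a' ∈ A_j`,
crossing into `b ∈ B j`. -/
lemma exitA (hcover : (⋃ i, Apart i) = A)
    (hB : ∀ i, B i = {x | x ∉ A ∧ ∃ a ∈ Apart i, G.Adj a x})
    (hcut : ∀ a ∈ A, ∀ b, b ∉ A → G.Adj a b → w a b = 1) :
    ∀ {x v : V} (q : G.Walk x v), x ∈ A → v ∉ A →
      ∃ (j : Fin k) (a' b : V) (q' : G.Walk b v), a' ∈ Apart j ∧ b ∈ B j ∧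
        q'.length < q.length ∧
        wdist G w x a' + 1 + (walkWeight w q' : ℕ∞) ≤ (walkWeight w q : ℕ∞) := by
  intro x v q
  induction q with
  | nil => intro hx hv; exact absurd hx hv
  | @cons x y v h q ih =>
    intro hx hv
    by_cases hy : y ∈ A
    · obtain ⟨j, a', b, q', ha', hb, hlen, hwt⟩ := ih hy hv
      refine ⟨j, a', b, q', ha', hb, by simp [SimpleGraph.Walk.length_cons]; omega, ?_⟩
      have htri : wdist G w x a' ≤ (w x y : ℕ∞) + wdist G w y a' := wdist_triangle_cons h
      calc wdist G w x a' + 1 + (walkWeight w q' : ℕ∞)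
          ≤ ((w x y : ℕ∞) + wdist G w y a') + 1 + (walkWeight w q' : ℕ∞) := by
            gcongr
        _ = (w x y : ℕ∞) + (wdist G w y a' + 1 + (walkWeight w q' : ℕ∞)) := by ring
        _ ≤ (w x y : ℕ∞) + (walkWeight w q : ℕ∞) := by gcongr
        _ = (walkWeight w (SimpleGraph.Walk.cons h q) : ℕ∞) := by
            rw [walkWeight_cons]; push_cast; ring
    · obtain ⟨j, hxj⟩ : ∃ j, x ∈ Apart j := by
        rw [← hcover] at hx; exact Set.mem_iUnion.mp hx
      refine ⟨j, x, y, q, hxj, ?_, by simp [SimpleGraph.Walk.length_cons], ?_⟩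
      · rw [hB]; exact ⟨hy, x, hxj, h⟩
      · have hxy : w x y = 1 := hcut x hx y hy h
        have h0 : wdist G w x x = 0 := le_antisymm
          (by simpa [walkWeight_nil] using
            wdist_le_walkWeight (w := w) (SimpleGraph.Walk.nil : G.Walk x x))
          (zero_le)
        rw [h0, walkWeight_cons, hxy]
        push_cast
        simp [add_comm]

lemma gadget_weight_inl_inl (u v : V) :
    gadgetWeightB G w Apart (Sum.inl u) (Sum.inl v) = w u v := rfl

lemma gadget_weight_inl_inr (u : V) (p : Fin k × Fin k) :
    gadgetWeightB G w Apart (Sum.inl u) (Sum.inr p) = 1 := by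
  obtain ⟨i, j⟩ := p; rfl

lemma gadget_weight_inr_inl (u : V) (p : Fin k × Fin k) :
    gadgetWeightB G w Apart (Sum.inr p) (Sum.inl u) = 1 := by
  obtain ⟨i, j⟩ := p; rfl

lemma gadget_weight_inr_inr (i j i' j' : Fin k) :
    gadgetWeightB G w Apart (Sum.inr (i, j)) (Sum.inr (i', j')) =
      (wSetDist G w (Apart i) (Apart i')).toNat := rfl

/-- T1: any `G`-walk between vertices outside `A` can be simulated in the gadget. -/
lemma walk_to_gadget (hwsym : ∀ u v, w u v = w v u)
    (hcover : (⋃ i, Apart i) = A)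
    (hB : ∀ i, B i = {x | x ∉ A ∧ ∃ a ∈ Apart i, G.Adj a x})
    (hcut : ∀ a ∈ A, ∀ b, b ∉ A → G.Adj a b → w a b = 1) :
    ∀ (n : ℕ) {u v : V}, u ∉ A → v ∉ A → ∀ (p : G.Walk u v), p.length ≤ n →
      ∃ q : (gadgetB G A B).Walk (Sum.inl u) (Sum.inl v),
        walkWeight (gadgetWeightB G w Apart) q ≤ walkWeight w p := by
  intro n
  induction n with
  | zero =>
    intro u v hu hv p hlen
    cases p with
    | nil => exact ⟨.nil, le_rfl⟩
    | cons h p' => simp [SimpleGraph.Walk.length_cons] at hlen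
  | succ n ih =>
    intro u v hu hv p hlen
    cases p with
    | nil => exact ⟨.nil, le_rfl⟩
    | @cons _ x _ h p' =>
      rw [SimpleGraph.Walk.length_cons] at hlen
      by_cases hx : x ∈ A
      · -- the walk enters A; find where it exits
        obtain ⟨i, hxi⟩ : ∃ i, x ∈ Apart i := by
          rw [← hcover] at hx; exact Set.mem_iUnion.mp hx
        have huBi : u ∈ B i := by rw [hB]; exact ⟨hu, x, hxi, h.symm⟩
        obtain ⟨j, a', b, q'', ha', hbB, hlen'', hwt⟩ :=
          exitA hcover hB hcut p' hx hv
        have hbA : b ∉ A := by rw [hB] at hbB; exact hbB.1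
        obtain ⟨r, hr⟩ := ih hbA hv q'' (by omega)
        have hwux : w u x = 1 := by rw [hwsym]; exact hcut x hx u hu h.symm
        -- from hwt : wdist G w x a' + 1 + q'' ≤ p'
        have hd : wSetDist G w (Apart i) (Apart j) ≤ wdist G w x a' :=
          wSetDist_le_wdist hxi ha'
        have hp'ne : (walkWeight w p' : ℕ∞) ≠ ⊤ := by simp
        by_cases hij : i = j
        · subst hij
          -- route u → a_{ii} → b → ... → v
          refine ⟨.cons (gadget_adj_inl_inr (j := i) huBi)
            (.cons (gadget_adj_inl_inr (j := i) hbB).symm r), ?_⟩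
          rw [walkWeight_cons, walkWeight_cons, gadget_weight_inl_inr,
            gadget_weight_inr_inl, walkWeight_cons, hwux]
          have h1 : (1 : ℕ∞) + (walkWeight w q'' : ℕ∞) ≤ (walkWeight w p' : ℕ∞) :=
            le_trans (by gcongr; exact le_add_self) hwt
          have h1' : 1 + walkWeight w q'' ≤ walkWeight w p' := by exact_mod_cast h1
          omega
        · -- route u → a_{ij} → a_{ji} → b → ... → v
          refine ⟨.cons (gadget_adj_inl_inr (j := j) huBi)
            (.cons (gadget_adj_inr_inr hij ⟨u, huBi⟩ ⟨b, hbB⟩)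
            (.cons (gadget_adj_inl_inr (j := i) hbB).symm r)), ?_⟩
          rw [walkWeight_cons, walkWeight_cons, walkWeight_cons, walkWeight_cons,
            gadget_weight_inl_inr, gadget_weight_inr_inr, gadget_weight_inr_inl, hwux]
          set d := wSetDist G w (Apart i) (Apart j) with hdd
          have hdne : d ≠ ⊤ := by
            intro htop
            rw [htop] at hd
            have : wdist G w x a' = ⊤ := top_le_iff.mp hd
            rw [this] at hwt
            simp at hwt
          have h2 : (d.toNat : ℕ∞) + 1 + (walkWeight w q'' : ℕ∞) ≤ (walkWeight w p' : ℕ∞) := by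
            rw [ENat.coe_toNat hdne]
            exact le_trans (by gcongr) hwt
          have h2' : d.toNat + 1 + walkWeight w q'' ≤ walkWeight w p' := by exact_mod_cast h2
          omega
      · obtain ⟨r, hr⟩ := ih hx hv p' (by omega)
        exact ⟨.cons (gadget_adj_inl_inl hu hx h) r, by
          rw [walkWeight_cons, walkWeight_cons, gadget_weight_inl_inl]; omega⟩

/-- Exit lemma for the gadget: a walk starting at `a_{ij}` first returns to a real
vertex in `B i` (cheaply) or in `B j` (paying the matching edge). -/
lemma exitGadget :
    ∀ (n : ℕ) (i j : Fin k) {v : V}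
      (q : (gadgetB G A B).Walk (Sum.inr (i, j)) (Sum.inl v)), q.length ≤ n →
      ∃ (b : V) (q' : (gadgetB G A B).Walk (Sum.inl b) (Sum.inl v)),
        q'.length < q.length ∧
        ((b ∈ B i ∧
            1 + walkWeight (gadgetWeightB G w Apart) q'
              ≤ walkWeight (gadgetWeightB G w Apart) q) ∨
         (b ∈ B j ∧
            (wSetDist G w (Apart i) (Apart j)).toNat + 1
                + walkWeight (gadgetWeightB G w Apart) q'
              ≤ walkWeight (gadgetWeightB G w Apart) q)) := by
  intro n
  induction n with
  | zero =>
    intro i j v q hlen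
    cases q with
    | cons h q2 => simp [SimpleGraph.Walk.length_cons] at hlen
  | succ n ih =>
    intro i j v q hlen
    cases q with
    | @cons _ s _ h q2 =>
      rw [SimpleGraph.Walk.length_cons] at hlen
      rcases gadget_adj_inr_elim h with ⟨b, rfl, hbB⟩ | ⟨rfl, hij⟩
      · refine ⟨b, q2, by simp [SimpleGraph.Walk.length_cons], Or.inl ⟨hbB, ?_⟩⟩
        rw [walkWeight_cons, gadget_weight_inr_inl]
      · obtain ⟨b, q', hlen', hcase⟩ := ih j i q2 (by omega)
        rw [walkWeight_cons, gadget_weight_inr_inr]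
        rcases hcase with ⟨hbB, hwt⟩ | ⟨hbB, hwt⟩
        · exact ⟨b, q', by simp [SimpleGraph.Walk.length_cons]; omega,
            Or.inr ⟨hbB, by omega⟩⟩
        · exact ⟨b, q', by simp [SimpleGraph.Walk.length_cons]; omega,
            Or.inl ⟨hbB, by omega⟩⟩

/-- T2: any gadget walk between real vertices can be simulated in `G`. -/
lemma gadget_to_walk (hG : G.Connected) (hwsym : ∀ u v, w u v = w v u)
    (hcover : (⋃ i, Apart i) = A)
    (hne : ∀ i, (Apart i).Nonempty)
    (hmod : ∀ i, ∀ u ∈ Apart i, ∀ v ∈ Apart i, ∀ x ∉ A, (G.Adj u x ↔ G.Adj v x))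
    (hB : ∀ i, B i = {x | x ∉ A ∧ ∃ a ∈ Apart i, G.Adj a x})
    (hcut : ∀ a ∈ A, ∀ b, b ∉ A → G.Adj a b → w a b = 1) :
    ∀ (n : ℕ) {u v : V} (p : (gadgetB G A B).Walk (Sum.inl u) (Sum.inl v)),
      p.length ≤ n →
      ∃ q : G.Walk u v, walkWeight w q ≤ walkWeight (gadgetWeightB G w Apart) p := by
  have hsubA : ∀ i, Apart i ⊆ A := by
    intro i; rw [← hcover]; exact Set.subset_iUnion _ i
  have hBnA : ∀ i, ∀ x ∈ B i, x ∉ A := by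
    intro i x hx; rw [hB] at hx; exact hx.1
  have hadj_all : ∀ m, ∀ a ∈ Apart m, ∀ x ∈ B m, G.Adj a x := by
    intro m a ham x hx
    rw [hB] at hx
    obtain ⟨hxA, a₀, ha₀, h0⟩ := hx
    exact (hmod m a₀ ha₀ a ham x hxA).mp h0
  have hcut1 : ∀ m, ∀ a ∈ Apart m, ∀ x ∈ B m, w a x = 1 := by
    intro m a ham x hx
    exact hcut a (hsubA m ham) x (hBnA m x hx) (hadj_all m a ham x hx)
  intro n
  induction n with
  | zero =>
    intro u v p hlen
    cases p with
    | nil => exact ⟨.nil, le_rfl⟩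
    | cons h p' => simp [SimpleGraph.Walk.length_cons] at hlen
  | succ n ih =>
    intro u v p hlen
    cases p with
    | nil => exact ⟨.nil, le_rfl⟩
    | @cons _ s _ h p' =>
      rw [SimpleGraph.Walk.length_cons] at hlen
      rcases gadget_adj_inl_elim h with ⟨x, rfl, hu, hx, hadj⟩ | ⟨i, j, rfl, huB⟩
      · obtain ⟨r, hr⟩ := ih p' (by omega)
        refine ⟨.cons hadj r, ?_⟩
        rw [walkWeight_cons, walkWeight_cons, gadget_weight_inl_inl]
        omega
      · obtain ⟨b, q', hlen', hcase⟩ := exitGadget (w := w) (Apart := Apart) n i j p' (by omega)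
        obtain ⟨r, hr⟩ := ih q' (by omega)
        rw [walkWeight_cons, gadget_weight_inl_inr]
        rcases hcase with ⟨hbB, hwt⟩ | ⟨hbB, hwt⟩
        · -- b ∈ B i : go through any a ∈ A_i
          obtain ⟨a, ha⟩ := hne i
          refine ⟨.cons (hadj_all i a ha u huB).symm (.cons (hadj_all i a ha b hbB) r), ?_⟩
          rw [walkWeight_cons, walkWeight_cons]
          have h1 : w u a = 1 := by rw [hwsym]; exact hcut1 i a ha u huB
          have h2 : w a b = 1 := hcut1 i a ha b hbB
          omega
        · -- b ∈ B j : go through a shortest A_i–A_j walk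
          set d := wSetDist G w (Apart i) (Apart j) with hdd
          have hdne : d ≠ ⊤ := by
            obtain ⟨s, hs⟩ := hne i
            obtain ⟨t, ht⟩ := hne j
            obtain ⟨p₀⟩ := hG.preconnected s t
            intro htop
            have h1 : d ≤ wdist G w s t := wSetDist_le_wdist hs ht
            have h2 : wdist G w s t ≤ (walkWeight w p₀ : ℕ∞) := wdist_le_walkWeight p₀
            rw [htop] at h1
            have := top_le_iff.mp (h1.trans h2)
            simp at this
          obtain ⟨s, hs, t, ht, p₀, hp₀⟩ := exists_walk_le_wSetDist hdne
          have hp₀' : walkWeight w p₀ ≤ d.toNat := by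
            simpa using ENat.toNat_le_toNat hp₀ hdne
          refine ⟨.cons (hadj_all i s hs u huB).symm
            (p₀.append (.cons (hadj_all j t ht b hbB) r)), ?_⟩
          rw [walkWeight_cons, walkWeight_append, walkWeight_cons]
          have h1 : w u s = 1 := by rw [hwsym]; exact hcut1 i s hs u huB
          have h2 : w t b = 1 := hcut1 j t ht b hbB
          omega

end Main

/-- **Lemma 4.4 for `H_B`.** Let `G` be connected with edge weights `w`, and
`(A, V \ A)` an unweighted cut whose minimal partition is `A_1, …, A_k`, with
`B_i = N_G(A_i) \ A`.  Then the gadget graph `H_B` preserves the distances: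
for all `u, v ∈ V \ A`, `d_G(u,v) = d_{H_B}(u,v)`. -/
theorem gadgetB_preserves_distances [Fintype V] (G : SimpleGraph V) (w : V → V → ℕ)
    (hG : G.Connected) (hwsym : ∀ u v, w u v = w v u)
    (A : Set V) (k : ℕ) (Apart : Fin k → Set V)
    (hcover : (⋃ i, Apart i) = A)
    (hne : ∀ i, (Apart i).Nonempty)
    (hdisj : ∀ i j, i ≠ j → Disjoint (Apart i) (Apart j))
    (hmod : ∀ i, ∀ u ∈ Apart i, ∀ v ∈ Apart i, ∀ x ∉ A, (G.Adj u x ↔ G.Adj v x))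
    (hmin : ∀ i j, i ≠ j →
      ∃ u ∈ Apart i, ∃ v ∈ Apart j, ∃ x ∉ A, ¬ (G.Adj u x ↔ G.Adj v x))
    (B : Fin k → Set V) (hB : ∀ i, B i = {x | x ∉ A ∧ ∃ a ∈ Apart i, G.Adj a x})
    (hcut : ∀ a ∈ A, ∀ b, b ∉ A → G.Adj a b → w a b = 1) :
    ∀ u, u ∉ A → ∀ v, v ∉ A →
      wdist G w u v =
        wdist (gadgetB G A B) (gadgetWeightB G w Apart) (Sum.inl u) (Sum.inl v) := by
  intro u hu v hv
  refine le_antisymm ?_ ?_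
  · apply le_iInf
    intro p
    obtain ⟨q, hq⟩ := gadget_to_walk hG hwsym hcover hne hmod hB hcut p.length p le_rfl
    exact (wdist_le_walkWeight q).trans (by exact_mod_cast hq)
  · apply le_iInf
    intro p
    obtain ⟨q, hq⟩ := walk_to_gadget hwsym hcover hB hcut p.length hu hv p le_rfl
    exact (wdist_le_walkWeight q).trans (by exact_mod_cast hq)
end
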